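/- For fixed φ₀ ∈ (0, π/2), the map T_{D⁻}(α) := 2T(α) − 2T₁(α, φ₀) is strictly increasing on (φ₀, π/2); in particular, if 0 < φ₀ < φ₁ < π/2 then T_{D⁻}(α) > 2T(φ₁) − 2T₁(φ₁, φ₀) for every α ∈ (φ₁, π/2). -/

import Mathlib

/-- The time map `T(α) = ∫₀^α dx / √(cos 2x − cos 2α)`. -/
noncomputable def timeMapT (α : ℝ) : ℝ :=
  ∫ x in (0:ℝ)..α, 1 / Real.sqrt (Real.cos (2 * x) - Real.cos (2 * α))

/-- The time map `T₁(α, φ) = ∫₀^φ dx / √(cos 2x − cos 2α)`. -/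
noncomputable def timeMapT1 (α φ : ℝ) : ℝ :=
  ∫ x in (0:ℝ)..φ, 1 / Real.sqrt (Real.cos (2 * x) - Real.cos (2 * α))

namespace TimeMapTDminusAux

open Real Set MeasureTheory intervalIntegral

/-- The integrand of the time maps. -/
noncomputable def F (γ x : ℝ) : ℝ := 1 / Real.sqrt (Real.cos (2 * x) - Real.cos (2 * γ))

lemma cos_diff_eq (γ x : ℝ) :
    Real.cos (2 * x) - Real.cos (2 * γ) = 2 * (Real.sin γ ^ 2 - Real.sin x ^ 2) := by
  have h1 := Real.cos_sq x
  have h2 := Real.cos_sq γ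
  have h3 := Real.sin_sq_add_cos_sq x
  have h4 := Real.sin_sq_add_cos_sq γ
  nlinarith

lemma cos_diff_pos {γ x : ℝ} (hx : 0 ≤ x) (hxγ : x < γ) (hγ : γ ≤ π / 2) :
    0 < Real.cos (2 * x) - Real.cos (2 * γ) := by
  rw [cos_diff_eq]
  have h1 : Real.sin x < Real.sin γ :=
    Real.sin_lt_sin_of_lt_of_le_pi_div_two (by linarith [Real.pi_div_two_pos]) hγ hxγ
  have h2 : 0 ≤ Real.sin x := Real.sin_nonneg_of_nonneg_of_le_pi hx (by linarith [Real.pi_pos])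
  nlinarith

lemma sin_sub_ge {γ x : ℝ} (hx : 0 ≤ x) (hxγ : x ≤ γ) (hγ : γ ≤ π / 2) :
    Real.cos γ * (γ - x) ≤ Real.sin γ - Real.sin x := by
  rcases eq_or_lt_of_le hxγ with rfl | h
  · simp
  · obtain ⟨c, hc, hc'⟩ := exists_hasDerivAt_eq_slope Real.sin Real.cos h
      Real.continuous_sin.continuousOn (fun y _ => Real.hasDerivAt_sin y)
    have hcc : Real.cos γ ≤ Real.cos c :=
      Real.cos_le_cos_of_nonneg_of_le_pi (by linarith [hc.1]) (by linarith [Real.pi_pos, hc.2])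
        hc.2.le
    have hγx : 0 < γ - x := by linarith
    have := hc'.symm
    calc Real.cos γ * (γ - x) ≤ Real.cos c * (γ - x) := by nlinarith
      _ = Real.sin γ - Real.sin x := by
          rw [hc']; field_simp

lemma lower_bound {γ x : ℝ} (hx : 0 ≤ x) (hxγ : x ≤ γ) (hγ : γ ≤ π / 2) :
    2 * (Real.cos γ * Real.sin γ) * (γ - x) ≤ Real.cos (2 * x) - Real.cos (2 * γ) := by
  rw [cos_diff_eq]
  have h1 := sin_sub_ge hx hxγ hγ
  have h2 : 0 ≤ Real.sin x := Real.sin_nonneg_of_nonneg_of_le_pi hx (by linarith [Real.pi_pos])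
  have h3 : Real.sin x ≤ Real.sin γ :=
    Real.sin_le_sin_of_le_of_le_pi_div_two (by linarith [Real.pi_div_two_pos]) hγ hxγ
  have h4 : 0 ≤ Real.cos γ := Real.cos_nonneg_of_mem_Icc ⟨by linarith [Real.pi_div_two_pos], hγ⟩
  nlinarith [mul_nonneg h4 (sub_nonneg.2 hxγ)]

/-- A general domination lemma near a right-endpoint singularity of order `-1/2`. -/
lemma intervalIntegrable_of_bound {f : ℝ → ℝ} {a γ C : ℝ} (haγ : a ≤ γ)
    (hm : AEStronglyMeasurable f (volume.restrict (Set.uIoc a γ)))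
    (hb : ∀ x ∈ Set.Ioc a γ, ‖f x‖ ≤ C * (γ - x) ^ (-(1/2) : ℝ)) :
    IntervalIntegrable f volume a γ := by
  have hdom : IntervalIntegrable (fun x => C * (γ - x) ^ (-(1/2) : ℝ)) volume a γ := by
    have h1 : IntervalIntegrable (fun x : ℝ => x ^ (-(1/2) : ℝ)) volume 0 (γ - a) :=
      intervalIntegral.intervalIntegrable_rpow' (by norm_num)
    have h2 := (h1.comp_sub_left γ).symm
    simp only [sub_zero, sub_sub_cancel] at h2
    exact h2.const_mul C
  refine hdom.mono_fun hm ?_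
  rw [Set.uIoc_of_le haγ]
  refine (ae_restrict_iff' measurableSet_Ioc).2 (Filter.Eventually.of_forall fun x hx => ?_)
  refine (hb x hx).trans (le_abs_self _)

lemma measurable_F (γ : ℝ) : Measurable (F γ) := by
  unfold F
  have h : Continuous fun x : ℝ => Real.sqrt (Real.cos (2 * x) - Real.cos (2 * γ)) := by
    fun_prop
  simpa [one_div] using h.measurable

lemma continuousOn_F {γ : ℝ} (hγ : γ ≤ π / 2) : ContinuousOn (F γ) (Set.Ico 0 γ) := by
  unfold F
  refine ContinuousOn.div continuousOn_const (by fun_prop) ?_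
  intro x hx
  exact (Real.sqrt_ne_zero'.2 (cos_diff_pos hx.1 hx.2 hγ))

lemma F_nonneg (γ x : ℝ) : 0 ≤ F γ x := by
  unfold F; positivity

lemma integrable_F {a γ : ℝ} (ha : 0 ≤ a) (haγ : a ≤ γ) (hγ : γ < π / 2) :
    IntervalIntegrable (F γ) volume a γ := by
  rcases eq_or_lt_of_le haγ with rfl | hlt
  · exact IntervalIntegrable.refl
  have hγ0 : 0 < γ := lt_of_le_of_lt ha hlt
  set K := 2 * (Real.cos γ * Real.sin γ) with hK
  have hKpos : 0 < K := by
    have h1 : 0 < Real.cos γ := Real.cos_pos_of_mem_Ioo ⟨by linarith [Real.pi_div_two_pos], hγ⟩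
    have h2 : 0 < Real.sin γ := Real.sin_pos_of_pos_of_lt_pi hγ0 (by linarith [Real.pi_pos])
    positivity
  refine intervalIntegrable_of_bound (C := (Real.sqrt K)⁻¹) hlt.le
    ((measurable_F γ).aestronglyMeasurable) ?_
  intro x hx
  have hx0 : 0 ≤ x := le_trans ha hx.1.le
  have hxγ : x ≤ γ := hx.2
  have hgx : γ - x ≥ 0 := by linarith
  have hF0 : 0 ≤ F γ x := by unfold F; positivity
  rw [Real.norm_eq_abs, abs_of_nonneg hF0]
  have hrw : (γ - x) ^ (-(1/2) : ℝ) = (Real.sqrt (γ - x))⁻¹ := by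
    rw [Real.sqrt_eq_rpow, ← Real.rpow_neg hgx]
  rw [hrw, ← mul_inv]
  have hsqK : Real.sqrt K * Real.sqrt (γ - x) = Real.sqrt (K * (γ - x)) :=
    (Real.sqrt_mul hKpos.le _).symm
  rw [hsqK]
  unfold F
  rw [one_div]
  have hle : Real.sqrt (K * (γ - x)) ≤ Real.sqrt (Real.cos (2 * x) - Real.cos (2 * γ)) :=
    Real.sqrt_le_sqrt (lower_bound hx0 hxγ hγ.le)
  rcases eq_or_lt_of_le hxγ with rfl | hxlt
  · simp
  · have hpos : 0 < Real.sqrt (K * (γ - x)) := Real.sqrt_pos.2 (mul_pos hKpos (by linarith))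
    exact inv_anti₀ hpos hle
lemma one_div_sqrt_le {K t g : ℝ} (hK : 0 < K) (ht : 0 ≤ t) (hle : K * t ≤ g)
    (heq : t = 0 → g = 0) :
    1 / Real.sqrt g ≤ (Real.sqrt K)⁻¹ * t ^ (-(1/2) : ℝ) := by
  rcases eq_or_lt_of_le ht with rfl | ht'
  · rw [heq rfl, Real.zero_rpow (by norm_num), Real.sqrt_zero]
    simp
  · have hrw : t ^ (-(1/2) : ℝ) = (Real.sqrt t)⁻¹ := by
      rw [Real.sqrt_eq_rpow, ← Real.rpow_neg ht]
    rw [hrw, ← mul_inv, ← Real.sqrt_mul hK.le, one_div]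
    exact inv_anti₀ (Real.sqrt_pos.2 (by positivity)) (Real.sqrt_le_sqrt hle)

set_option maxHeartbeats 2000000 in
lemma key_lt {p b a : ℝ} (hp : 0 < p) (hpb : p < b) (hba : b < a) (ha : a < π / 2) :
    (∫ x in p..b, F b x) < ∫ x in p..a, F a x := by
  have hπ := Real.pi_div_two_pos
  have hb2 : b < π / 2 := hba.trans ha
  have hp2 : p < π / 2 := hpb.trans hb2
  set s0 := Real.sin p with hs0def
  set sb := Real.sin b with hsbdef
  set sa := Real.sin a with hsadef
  have hs0 : 0 < s0 := Real.sin_pos_of_pos_of_lt_pi hp (by linarith [Real.pi_pos])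
  have h0b : s0 < sb := Real.sin_lt_sin_of_lt_of_le_pi_div_two (by linarith) hb2.le hpb
  have hbsa : sb < sa := Real.sin_lt_sin_of_lt_of_le_pi_div_two (by linarith) ha.le hba
  have hsa1 : sa < 1 := by
    have h := Real.sin_lt_sin_of_lt_of_le_pi_div_two (x := a) (y := π / 2) (by linarith)
      le_rfl ha
    simpa using h
  set lam := (sa ^ 2 - s0 ^ 2) / (sb ^ 2 - s0 ^ 2) with hlamdef
  have hden : 0 < sb ^ 2 - s0 ^ 2 := by nlinarith
  have hlam1 : 1 < lam := (one_lt_div hden).2 (by nlinarith)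
  have hlam0 : 0 < lam := by linarith
  obtain ⟨v, hvdef⟩ : ∃ v : ℝ → ℝ, v = fun x => s0 ^ 2 + lam * (Real.sin x ^ 2 - s0 ^ 2) :=
    ⟨_, rfl⟩
  obtain ⟨y, hydef⟩ : ∃ y : ℝ → ℝ, y = fun x => Real.arcsin (Real.sqrt (v x)) := ⟨_, rfl⟩
  have hlamden : lam * (sb ^ 2 - s0 ^ 2) = sa ^ 2 - s0 ^ 2 := div_mul_cancel₀ _ hden.ne'
  have hkey : ∀ x : ℝ, sa ^ 2 - v x = lam * (sb ^ 2 - Real.sin x ^ 2) := by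
    intro x
    calc sa ^ 2 - v x = lam * (sb ^ 2 - s0 ^ 2) - lam * (Real.sin x ^ 2 - s0 ^ 2) := by
          rw [hlamden]; simp only [hvdef]; ring
      _ = lam * (sb ^ 2 - Real.sin x ^ 2) := by ring
  -- bounds for sin on [p, b]
  have hsin : ∀ x ∈ Set.Icc p b, s0 ≤ Real.sin x ∧ Real.sin x ≤ sb := fun x hx =>
    ⟨Real.sin_le_sin_of_le_of_le_pi_div_two (by linarith) (by linarith [hx.2]) hx.1,
     Real.sin_le_sin_of_le_of_le_pi_div_two (by linarith [hx.1]) hb2.le hx.2⟩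
  have hsa0 : 0 < sa := by linarith
  have hvlb : ∀ x ∈ Set.Icc p b, s0 ^ 2 ≤ v x := by
    intro x hx
    obtain ⟨h1, _⟩ := hsin x hx
    have h2 : 0 ≤ lam * (Real.sin x ^ 2 - s0 ^ 2) :=
      mul_nonneg hlam0.le (by nlinarith)
    simp only [hvdef]
    linarith
  have hvpos : ∀ x ∈ Set.Icc p b, 0 < v x := fun x hx => lt_of_lt_of_le (by positivity) (hvlb x hx)
  have hvub : ∀ x ∈ Set.Icc p b, v x ≤ sa ^ 2 := by
    intro x hx
    obtain ⟨h1, h2⟩ := hsin x hx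
    have h3 : 0 ≤ Real.sin x := le_trans hs0.le h1
    have h4 : 0 ≤ lam * (sb ^ 2 - Real.sin x ^ 2) := mul_nonneg hlam0.le (by nlinarith)
    linarith [hkey x]
  have hv1 : ∀ x ∈ Set.Icc p b, v x < 1 := fun x hx =>
    lt_of_le_of_lt (hvub x hx) (by nlinarith)
  have hsb0 : 0 < sb := by linarith
  have hvub' : ∀ x ∈ Set.Icc p b, x < b → v x < sa ^ 2 := by
    intro x hx hxb
    have h1 : Real.sin x < sb := Real.sin_lt_sin_of_lt_of_le_pi_div_two (by linarith [hx.1])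
      hb2.le hxb
    have h0 : 0 ≤ Real.sin x := le_trans hs0.le (hsin x hx).1
    have h4 : 0 < lam * (sb ^ 2 - Real.sin x ^ 2) := mul_pos hlam0 (by nlinarith)
    linarith [hkey x]
  -- endpoint values
  have hyp : y p = p := by
    have h1 : v p = s0 ^ 2 := by simp [hvdef, hs0def]
    simp only [hydef, h1, Real.sqrt_sq hs0.le]
    exact Real.arcsin_sin (by linarith) hp2.le
  have hyb : y b = a := by
    have h1 : v b = sa ^ 2 := by
      simp only [hvdef, ← hsbdef]
      linarith [hlamden]
    simp only [hydef, h1, Real.sqrt_sq hsa0.le]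
    exact Real.arcsin_sin (by linarith) ha.le
  -- membership of y
  have hy_mem : ∀ x ∈ Set.Icc p b, y x ∈ Set.Icc p a := by
    intro x hx
    constructor
    · have h1 : s0 ≤ Real.sqrt (v x) := by
        rw [show s0 = Real.sqrt (s0 ^ 2) from (Real.sqrt_sq hs0.le).symm]
        exact Real.sqrt_le_sqrt (hvlb x hx)
      have h2 : Real.arcsin s0 ≤ Real.arcsin (Real.sqrt (v x)) := Real.monotone_arcsin h1
      rw [hs0def, Real.arcsin_sin (by linarith) hp2.le] at h2
      simpa [hydef] using h2
    · have h1 : Real.sqrt (v x) ≤ sa := by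
        rw [show sa = Real.sqrt (sa ^ 2) from (Real.sqrt_sq hsa0.le).symm]
        exact Real.sqrt_le_sqrt (hvub x hx)
      have h2 : Real.arcsin (Real.sqrt (v x)) ≤ Real.arcsin sa := Real.monotone_arcsin h1
      rw [hsadef, Real.arcsin_sin (by linarith) ha.le] at h2
      simpa [hydef] using h2
  have hy_lt : ∀ x ∈ Set.Icc p b, x < b → y x < a := by
    intro x hx hxb
    have h1 : Real.sqrt (v x) < sa := by
      rw [show sa = Real.sqrt (sa ^ 2) from (Real.sqrt_sq hsa0.le).symm]
      exact Real.sqrt_lt_sqrt (hvpos x hx).le (hvub' x hx hxb)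
    have h2 : Real.arcsin (Real.sqrt (v x)) < Real.arcsin sa :=
      Real.strictMonoOn_arcsin ⟨by linarith [Real.sqrt_nonneg (v x)], Real.sqrt_le_one.2 (hv1 x hx).le⟩
        ⟨by linarith, hsa1.le⟩ h1
    rw [hsadef, Real.arcsin_sin (by linarith) ha.le] at h2
    simpa [hydef] using h2
  -- the derivative
  obtain ⟨w, hwdef⟩ : ∃ w : ℝ → ℝ, w = fun x =>
    lam * Real.sin x * Real.cos x / (Real.sqrt (v x) * Real.sqrt (1 - v x)) := ⟨_, rfl⟩
  have hderiv : ∀ x ∈ Set.Ioo p b, HasDerivAt y (w x) x := by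
    intro x hx
    have hxI : x ∈ Set.Icc p b := ⟨hx.1.le, hx.2.le⟩
    have hv0 : 0 < v x := hvpos x hxI
    have hv1' : v x < 1 := hv1 x hxI
    have hsq0 : 0 < Real.sqrt (v x) := Real.sqrt_pos.2 hv0
    have hsq1 : Real.sqrt (v x) < 1 := by
      rw [show (1:ℝ) = Real.sqrt 1 from Real.sqrt_one.symm]
      exact Real.sqrt_lt_sqrt hv0.le hv1'
    have hsq1' : 0 < Real.sqrt (1 - v x) := Real.sqrt_pos.2 (by linarith)
    have hd1 : HasDerivAt v (lam * (2 * Real.sin x * Real.cos x)) x := by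
      rw [hvdef]
      have h := ((Real.hasDerivAt_sin x).pow 2).sub_const (s0 ^ 2)
      have h2 := (h.const_mul lam).const_add (s0 ^ 2)
      refine h2.congr_deriv ?_
      push_cast
      ring
    have hd2 : HasDerivAt Real.sqrt (1 / (2 * Real.sqrt (v x))) (v x) :=
      Real.hasDerivAt_sqrt hv0.ne'
    have hd3 : HasDerivAt Real.arcsin (1 / Real.sqrt (1 - Real.sqrt (v x) ^ 2))
        (Real.sqrt (v x)) :=
      Real.hasDerivAt_arcsin (by linarith) (by linarith)
    have hcomp := (hd3.comp x (hd2.comp x hd1))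
    have heq : (1 / Real.sqrt (1 - Real.sqrt (v x) ^ 2)) *
        ((1 / (2 * Real.sqrt (v x))) * (lam * (2 * Real.sin x * Real.cos x))) = w x := by
      rw [Real.sq_sqrt hv0.le, hwdef]
      field_simp
    rw [heq] at hcomp
    rw [hydef]
    exact hcomp
  -- continuity
  have hv_cont : Continuous v := by rw [hvdef]; fun_prop
  have hy_cont : Continuous y := by
    rw [hydef]; exact Real.continuous_arcsin.comp (Real.continuous_sqrt.comp hv_cont)
  have hmm : Set.uIcc p b = Set.Icc p b := Set.uIcc_of_le hpb.le
  have hminpb : min p b = p := min_eq_left hpb.le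
  have hmaxpb : max p b = b := max_eq_right hpb.le
  -- integrability of F a on the image
  have h1g : IntervalIntegrable (F a) volume p a := integrable_F hp.le (by linarith) ha
  have hg1 : IntegrableOn (F a) (y '' Set.uIcc p b) volume := by
    have h2 : IntegrableOn (F a) (Set.Icc p a) volume := by
      rw [intervalIntegrable_iff'] at h1g
      rwa [Set.uIcc_of_le (by linarith : p ≤ a)] at h1g
    refine h2.mono_set ?_
    rw [hmm]
    rintro z ⟨x, hx, rfl⟩
    exact hy_mem x hx
  -- continuity of F a on the open image
  have hg_cont : ContinuousOn (F a) (y '' Set.Ioo (min p b) (max p b)) := by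
    rw [hminpb, hmaxpb]
    refine (continuousOn_F ha.le).mono ?_
    rintro z ⟨x, hx, rfl⟩
    have hxI : x ∈ Set.Icc p b := ⟨hx.1.le, hx.2.le⟩
    exact ⟨le_trans hp.le (hy_mem x hxI).1, hy_lt x hxI hx.2⟩
  have hderiv' : ∀ x ∈ Set.Ioo (min p b) (max p b), HasDerivWithinAt y (w x) (Set.Ioi x) x := by
    rw [hminpb, hmaxpb]
    exact fun x hx => (hderiv x hx).hasDerivWithinAt
  -- integrability of the pulled-back integrand
  have hKb : 0 < Real.cos b * Real.sin b := by
    have h1 : 0 < Real.cos b := Real.cos_pos_of_mem_Ioo ⟨by linarith, hb2⟩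
    have h2 : 0 < Real.sin b := by rw [← hsbdef]; exact hsb0
    positivity
  have hCw0 : 0 < s0 * Real.sqrt (1 - sa ^ 2) := by
    have : 0 < 1 - sa ^ 2 := by nlinarith
    positivity
  have hwFa_int : IntervalIntegrable (fun x => w x • (F a ∘ y) x) volume p b := by
    refine intervalIntegrable_of_bound
      (C := lam / (s0 * Real.sqrt (1 - sa ^ 2)) *
        (Real.sqrt (lam * (2 * (Real.cos b * Real.sin b))))⁻¹) hpb.le ?_ ?_
    · have hw_m : Measurable w := by
        rw [hwdef]
        have hnum : Continuous fun x : ℝ => lam * Real.sin x * Real.cos x := by fun_prop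
        have hden2 : Continuous fun x : ℝ => Real.sqrt (v x) * Real.sqrt (1 - v x) :=
          (Real.continuous_sqrt.comp hv_cont).mul
            (Real.continuous_sqrt.comp (continuous_const.sub hv_cont))
        exact hnum.measurable.div hden2.measurable
      have hF_m : Measurable (F a ∘ y) := (measurable_F a).comp hy_cont.measurable
      exact ((hw_m.smul hF_m).aestronglyMeasurable)
    · intro x hx
      have hxI : x ∈ Set.Icc p b := ⟨hx.1.le, hx.2⟩
      have hsx0 : 0 ≤ Real.sin x := le_trans hs0.le (hsin x hxI).1
      have hsx1 : Real.sin x ≤ 1 := Real.sin_le_one x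
      have hcx0 : 0 ≤ Real.cos x :=
        Real.cos_nonneg_of_mem_Icc ⟨by linarith [hxI.1], by linarith [hxI.2]⟩
      have hcx1 : Real.cos x ≤ 1 := Real.cos_le_one x
      have hv0 : 0 < v x := hvpos x hxI
      have hv1' : v x < 1 := hv1 x hxI
      -- bound on w
      have hsqv_lb : s0 ≤ Real.sqrt (v x) := by
        rw [show s0 = Real.sqrt (s0 ^ 2) from (Real.sqrt_sq hs0.le).symm]
        exact Real.sqrt_le_sqrt (hvlb x hxI)
      have hsq1v_lb : Real.sqrt (1 - sa ^ 2) ≤ Real.sqrt (1 - v x) :=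
        Real.sqrt_le_sqrt (by linarith [hvub x hxI])
      have hw_nonneg : 0 ≤ w x := by
        rw [hwdef]
        positivity
      have hw_le : w x ≤ lam / (s0 * Real.sqrt (1 - sa ^ 2)) := by
        rw [hwdef]
        have hhh : lam * Real.sin x * Real.cos x ≤ lam := by
          have h1 : 0 ≤ 1 - Real.sin x := by linarith
          have h2 := mul_nonneg (mul_nonneg hlam0.le h1) hcx0
          have h3 := mul_le_mul_of_nonneg_left hcx1 hlam0.le
          nlinarith
        apply div_le_div₀ (le_of_lt hlam0) hhh hCw0
        exact mul_le_mul hsqv_lb hsq1v_lb (Real.sqrt_nonneg _) (Real.sqrt_nonneg _)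
      -- value and bound for F a (y x)
      have hsqv_le1 : Real.sqrt (v x) ≤ 1 := Real.sqrt_le_one.2 hv1'.le
      have hsin_y : Real.sin (y x) = Real.sqrt (v x) := by
        rw [hydef]
        exact Real.sin_arcsin (by linarith [Real.sqrt_nonneg (v x)]) hsqv_le1
      have hFa_eq : F a (y x) = 1 / Real.sqrt (2 * (lam * (sb ^ 2 - Real.sin x ^ 2))) := by
        unfold F
        rw [cos_diff_eq a (y x), hsin_y, Real.sq_sqrt hv0.le, ← hsadef, hkey x]
      have hFa_le : F a (y x) ≤ (Real.sqrt (lam * (2 * (Real.cos b * Real.sin b))))⁻¹ *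
          (b - x) ^ (-(1/2) : ℝ) := by
        rw [hFa_eq]
        refine one_div_sqrt_le (by positivity) (by linarith [hx.2]) ?_ ?_
        · have hlow := lower_bound (by linarith [hxI.1] : (0:ℝ) ≤ x) hxI.2 hb2.le
          rw [cos_diff_eq] at hlow
          rw [← hsbdef] at hlow
          nlinarith
        · intro h0
          have hxb : x = b := by linarith
          subst hxb
          simp [← hsbdef]
      have hFa_nonneg : 0 ≤ F a (y x) := by
        unfold F; positivity
      rw [Real.norm_eq_abs, smul_eq_mul, abs_of_nonneg (by
        simp only [Function.comp_apply]
        exact mul_nonneg hw_nonneg hFa_nonneg)]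
      simp only [Function.comp_apply]
      rw [mul_assoc]
      exact mul_le_mul hw_le hFa_le hFa_nonneg (by positivity)
  have hg2 : IntegrableOn (fun x => w x • (F a ∘ y) x) (Set.uIcc p b) volume := by
    rw [← intervalIntegrable_iff']
    exact hwFa_int
  -- the substitution
  have hsub := intervalIntegral.integral_comp_smul_deriv''' (a := p) (b := b)
    (f := y) (f' := w) (g := F a) hy_cont.continuousOn hderiv' hg_cont hg1 hg2
  rw [hyp, hyb] at hsub
  -- pointwise strict inequality
  have hptwise : ∀ x ∈ Set.Ioo p b, 0 < w x • (F a ∘ y) x - F b x := by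
    intro x hx
    have hxI : x ∈ Set.Icc p b := ⟨hx.1.le, hx.2.le⟩
    have hsx0 : 0 < Real.sin x := Real.sin_pos_of_pos_of_lt_pi (by linarith [hx.1])
      (by linarith [Real.pi_pos, hx.2])
    have hcx0 : 0 < Real.cos x := Real.cos_pos_of_mem_Ioo ⟨by linarith [hx.1], by linarith [hx.2]⟩
    have hs0x : s0 < Real.sin x :=
      Real.sin_lt_sin_of_lt_of_le_pi_div_two (by linarith) (by linarith [hx.2]) hx.1
    have hxsb : Real.sin x < sb :=
      Real.sin_lt_sin_of_lt_of_le_pi_div_two (by linarith [hx.1]) hb2.le hx.2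
    have hq : 0 < sb ^ 2 - Real.sin x ^ 2 := by
      have h1 : 0 < (sb - Real.sin x) * (sb + Real.sin x) :=
        mul_pos (by linarith) (by linarith)
      have h2 : sb ^ 2 - Real.sin x ^ 2 = (sb - Real.sin x) * (sb + Real.sin x) := by ring
      linarith
    have hv0 : 0 < v x := hvpos x hxI
    have hv1' : v x < 1 := hv1 x hxI
    have hVu : Real.sin x ^ 2 < v x := by
      have h1 : v x - Real.sin x ^ 2 = (lam - 1) * (Real.sin x ^ 2 - s0 ^ 2) := by
        rw [hvdef]; ring
      have h2 : 0 < Real.sin x ^ 2 - s0 ^ 2 := by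
        have h3 : 0 < (Real.sin x - s0) * (Real.sin x + s0) :=
          mul_pos (by linarith) (by linarith)
        have h4 : Real.sin x ^ 2 - s0 ^ 2 = (Real.sin x - s0) * (Real.sin x + s0) := by ring
        linarith
      have h5 := mul_pos (sub_pos.2 hlam1) h2
      linarith
    have hlamuV : v x < lam * Real.sin x ^ 2 := by
      have h1 : lam * Real.sin x ^ 2 - v x = (lam - 1) * s0 ^ 2 := by
        rw [hvdef]; ring
      have h2 := mul_pos (sub_pos.2 hlam1) (pow_pos hs0 2)
      linarith
    have hc2 : Real.cos x ^ 2 = 1 - Real.sin x ^ 2 := by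
      linarith [Real.sin_sq_add_cos_sq x]
    have hkey2 : v x * (1 - v x) < lam * Real.sin x ^ 2 * Real.cos x ^ 2 := by
      rw [hc2]
      have h1 : 0 < (1 - v x) * (lam * Real.sin x ^ 2 - v x) :=
        mul_pos (by linarith) (by linarith)
      have h2 : 0 < lam * Real.sin x ^ 2 * (v x - Real.sin x ^ 2) :=
        mul_pos (mul_pos hlam0 (pow_pos hsx0 2)) (by linarith)
      have h3 : lam * Real.sin x ^ 2 * (1 - Real.sin x ^ 2) - v x * (1 - v x) =
          (1 - v x) * (lam * Real.sin x ^ 2 - v x) +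
            lam * Real.sin x ^ 2 * (v x - Real.sin x ^ 2) := by ring
      linarith
    -- values
    have hsqv_le1 : Real.sqrt (v x) ≤ 1 := Real.sqrt_le_one.2 hv1'.le
    have hsin_y : Real.sin (y x) = Real.sqrt (v x) := by
      rw [hydef]
      exact Real.sin_arcsin (by linarith [Real.sqrt_nonneg (v x)]) hsqv_le1
    have hFa_eq : F a (y x) = 1 / Real.sqrt (2 * (lam * (sb ^ 2 - Real.sin x ^ 2))) := by
      unfold F
      rw [cos_diff_eq a (y x), hsin_y, Real.sq_sqrt hv0.le, ← hsadef, hkey x]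
    have hFb_eq : F b x = 1 / Real.sqrt (2 * (sb ^ 2 - Real.sin x ^ 2)) := by
      unfold F
      rw [cos_diff_eq b x, ← hsbdef]
    simp only [smul_eq_mul, Function.comp_apply]
    rw [hFa_eq, hFb_eq, hwdef, sub_pos]
    set q := sb ^ 2 - Real.sin x ^ 2 with hqdef
    have hcombine : lam * Real.sin x * Real.cos x / (Real.sqrt (v x) * Real.sqrt (1 - v x)) *
        (1 / Real.sqrt (2 * (lam * q))) =
        lam * Real.sin x * Real.cos x / Real.sqrt (v x * (1 - v x) * (2 * (lam * q))) := by
      rw [div_mul_div_comm, mul_one, ← Real.sqrt_mul hv0.le, ← Real.sqrt_mul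
        (mul_nonneg hv0.le (by linarith : (0:ℝ) ≤ 1 - v x))]
    rw [hcombine]
    have hD : 0 < v x * (1 - v x) * (2 * (lam * q)) := by
      have h1 : 0 < 1 - v x := by linarith
      have h2 : 0 < 2 * (lam * q) := by positivity
      exact mul_pos (mul_pos hv0 h1) h2
    have hN : 0 < lam * Real.sin x * Real.cos x := by positivity
    have hsqD : 0 < Real.sqrt (v x * (1 - v x) * (2 * (lam * q))) := Real.sqrt_pos.2 hD
    have hsq2q : 0 < Real.sqrt (2 * q) := Real.sqrt_pos.2 (by positivity)
    rw [div_lt_div_iff₀ hsq2q hsqD]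
    have hchain : Real.sqrt (v x * (1 - v x) * (2 * (lam * q))) <
        Real.sqrt ((lam * Real.sin x * Real.cos x) ^ 2 * (2 * q)) := by
      apply Real.sqrt_lt_sqrt hD.le
      have h1 := mul_lt_mul_of_pos_right hkey2 (show (0:ℝ) < 2 * (lam * q) by positivity)
      have h2 : (lam * Real.sin x * Real.cos x) ^ 2 * (2 * q) =
          lam * Real.sin x ^ 2 * Real.cos x ^ 2 * (2 * (lam * q)) := by ring
      linarith
    have hsq_eq : Real.sqrt ((lam * Real.sin x * Real.cos x) ^ 2 * (2 * q)) =
        lam * Real.sin x * Real.cos x * Real.sqrt (2 * q) := by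
      rw [Real.sqrt_mul (sq_nonneg _), Real.sqrt_sq hN.le]
    rw [hsq_eq] at hchain
    linarith
  -- conclusion
  have hIb : IntervalIntegrable (F b) volume p b := integrable_F hp.le hpb.le hb2
  have hpos : 0 < ∫ x in p..b, (w x • (F a ∘ y) x - F b x) :=
    intervalIntegral.intervalIntegral_pos_of_pos_on ((hwFa_int).sub hIb) hptwise hpb
  rw [intervalIntegral.integral_sub hwFa_int hIb, hsub] at hpos
  linarith

end TimeMapTDminusAux

open Real TimeMapTDminusAux

/-- For fixed `φ₀ ∈ (0, π/2)`, the map `T_{D⁻}(α) = 2T(α) − 2T₁(α, φ₀)` is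
strictly increasing on `(φ₀, π/2)`; in particular, if `0 < φ₀ < φ₁ < π/2` then
`T_{D⁻}(α) > 2T(φ₁) − 2T₁(φ₁, φ₀)` for every `α ∈ (φ₁, π/2)`. -/
theorem timeMapTDminus_strictMono (φ₀ : ℝ) (h₀ : φ₀ ∈ Set.Ioo 0 (π / 2)) :
    StrictMonoOn (fun α => 2 * timeMapT α - 2 * timeMapT1 α φ₀)
      (Set.Ioo φ₀ (π / 2)) ∧
    ∀ φ₁ : ℝ, φ₀ < φ₁ → φ₁ < π / 2 → ∀ α ∈ Set.Ioo φ₁ (π / 2),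
      2 * timeMapT α - 2 * timeMapT1 α φ₀ >
        2 * timeMapT φ₁ - 2 * timeMapT1 φ₁ φ₀ := by
  obtain ⟨hp0, hp2⟩ := h₀
  have hsplit : ∀ γ : ℝ, φ₀ < γ → γ < π / 2 →
      timeMapT γ - timeMapT1 γ φ₀ = ∫ x in φ₀..γ, F γ x := by
    intro γ h1 h2
    have hi1 : IntervalIntegrable (F γ) MeasureTheory.volume 0 φ₀ := by
      refine ((continuousOn_F h2.le).mono ?_).intervalIntegrable
      rw [Set.uIcc_of_le hp0.le]
      exact Set.Icc_subset_Ico_right h1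
    have hi2 : IntervalIntegrable (F γ) MeasureTheory.volume φ₀ γ :=
      integrable_F hp0.le h1.le h2
    have hadd := intervalIntegral.integral_add_adjacent_intervals hi1 hi2
    have hT : timeMapT γ = ∫ x in (0:ℝ)..γ, F γ x := rfl
    have hT1 : timeMapT1 γ φ₀ = ∫ x in (0:ℝ)..φ₀, F γ x := rfl
    rw [hT, hT1, ← hadd]
    ring
  have hmain : StrictMonoOn (fun α => 2 * timeMapT α - 2 * timeMapT1 α φ₀)
      (Set.Ioo φ₀ (π / 2)) := by
    intro b hb a ha hba
    simp only
    have e1 := hsplit b hb.1 hb.2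
    have e2 := hsplit a (hb.1.trans hba) ha.2
    have hk := key_lt hp0 hb.1 hba ha.2
    linarith
  exact ⟨hmain, fun φ₁ h1 h2 α hα => hmain ⟨h1, h2⟩ ⟨h1.trans hα.1, hα.2⟩ hα.1⟩
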